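/- Let G, Q, H be real symmetric d×d matrices with G positive definite, and let 0 < μ_min ≤ μ_max be constants such that μ_min·G ⪯ Q and H ⪯ μ_max·G in the Loewner order (so in particular Q is positive definite and H is positive semidefinite). Then for every v ∈ ℝ^d, ‖Q⁻¹v‖_H ≤ (√μ_max / μ_min)·‖v‖_{G⁻¹}, where ‖v‖_A = √(vᵀAv). -/

import Mathlib

open Matrix

/-- Cauchy–Schwarz for a positive semidefinite symmetric real quadratic form. -/
lemma cs_aux {d : ℕ} (G : Matrix (Fin d) (Fin d) ℝ) (hs : G.IsSymm)
    (hpsd : ∀ x : Fin d → ℝ, 0 ≤ x ⬝ᵥ G.mulVec x) (x y : Fin d → ℝ) :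
    (x ⬝ᵥ G.mulVec y) ^ 2 ≤ (x ⬝ᵥ G.mulVec x) * (y ⬝ᵥ G.mulVec y) := by
  have hsymm : y ⬝ᵥ G.mulVec x = x ⬝ᵥ G.mulVec y := by
    rw [dotProduct_mulVec, ← mulVec_transpose, hs.eq, dotProduct_comm]
  have key : ∀ t : ℝ,
      0 ≤ (y ⬝ᵥ G.mulVec y) * (t * t) + (2 * (x ⬝ᵥ G.mulVec y)) * t
        + x ⬝ᵥ G.mulVec x := by
    intro t
    have h := hpsd (x + t • y)
    simp only [mulVec_add, mulVec_smul, dotProduct_add, add_dotProduct,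
      dotProduct_smul, smul_dotProduct, smul_eq_mul] at h
    rw [hsymm] at h
    nlinarith [h]
  have hd := discrim_le_zero key
  unfold discrim at hd
  nlinarith [hd]

/-- Norm comparison under Loewner sandwiching: if `μ_min·G ⪯ Q` and `H ⪯ μ_max·G` with `G`
positive definite, then `‖Q⁻¹v‖_H ≤ (√μ_max / μ_min)·‖v‖_{G⁻¹}`. -/
theorem norm_inv_apply_le
    {d : ℕ} (G Q H : Matrix (Fin d) (Fin d) ℝ)
    (hGsymm : G.IsSymm) (hQsymm : Q.IsSymm) (hHsymm : H.IsSymm)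
    (hGpd : G.PosDef)
    (μmin μmax : ℝ) (hμmin : 0 < μmin) (hμ : μmin ≤ μmax)
    (hQlow : ∀ x : Fin d → ℝ, μmin * (x ⬝ᵥ G.mulVec x) ≤ x ⬝ᵥ Q.mulVec x)
    (hHup : ∀ x : Fin d → ℝ, x ⬝ᵥ H.mulVec x ≤ μmax * (x ⬝ᵥ G.mulVec x))
    (hHpsd : ∀ x : Fin d → ℝ, 0 ≤ x ⬝ᵥ H.mulVec x) :
    ∀ v : Fin d → ℝ,
      Real.sqrt (Q⁻¹.mulVec v ⬝ᵥ H.mulVec (Q⁻¹.mulVec v))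
        ≤ (Real.sqrt μmax / μmin) * Real.sqrt (v ⬝ᵥ G⁻¹.mulVec v) := by
  intro v
  have hμmax : (0:ℝ) < μmax := lt_of_lt_of_le hμmin hμ
  have hGpsd : ∀ x : Fin d → ℝ, 0 ≤ x ⬝ᵥ G.mulVec x := fun x =>
    (hGpd.posSemidef.dotProduct_mulVec_nonneg x)
  -- Q is positive definite
  have hQpd : Q.PosDef := by
    refine Matrix.PosDef.of_dotProduct_mulVec_pos ?_ (fun x hx => ?_)
    · rw [Matrix.IsHermitian, conjTranspose_eq_transpose_of_trivial]
      exact hQsymm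
    · have h1 : 0 < x ⬝ᵥ G.mulVec x := hGpd.dotProduct_mulVec_pos hx
      have := hQlow x
      simp only [star_trivial]
      nlinarith
  have hQdet : IsUnit Q.det := isUnit_iff_ne_zero.mpr hQpd.det_pos.ne'
  set w := Q⁻¹.mulVec v with hw
  have hQw : Q.mulVec w = v := by
    rw [hw, mulVec_mulVec, Matrix.mul_nonsing_inv Q hQdet, one_mulVec]
  -- G⁻¹ facts
  have hGdet : IsUnit G.det := isUnit_iff_ne_zero.mpr hGpd.det_pos.ne'
  set u := G⁻¹.mulVec v with hu
  have hGu : G.mulVec u = v := by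
    rw [hu, mulVec_mulVec, Matrix.mul_nonsing_inv G hGdet, one_mulVec]
  set a := w ⬝ᵥ G.mulVec w with ha
  set b := v ⬝ᵥ G⁻¹.mulVec v with hb
  have hbu : b = u ⬝ᵥ G.mulVec u := by
    rw [hb, ← hu, hGu, dotProduct_comm]
  have ha0 : 0 ≤ a := hGpsd w
  have hb0 : 0 ≤ b := by rw [hbu]; exact hGpsd u
  -- μmin * a ≤ w ⬝ᵥ v
  have h2 : μmin * a ≤ w ⬝ᵥ v := by
    have := hQlow w
    rwa [hQw] at this
  -- Cauchy–Schwarz : (w ⬝ᵥ v)^2 ≤ a * b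
  have h3 : (w ⬝ᵥ v) ^ 2 ≤ a * b :=
    calc (w ⬝ᵥ v) ^ 2 = (w ⬝ᵥ G.mulVec u) ^ 2 := by rw [hGu]
      _ ≤ a * (u ⬝ᵥ G.mulVec u) := cs_aux G hGsymm hGpsd w u
      _ = a * b := by rw [hbu]
  -- conclude μmin^2 * a ≤ b
  have h4 : μmin ^ 2 * a ≤ b := by
    rcases ha0.eq_or_lt with h | h
    · rw [← h]; simpa using hb0
    · have hp0 : 0 ≤ μmin * a := mul_nonneg hμmin.le ha0
      have hsq : (μmin * a) * (μmin * a) ≤ (w ⬝ᵥ v) * (w ⬝ᵥ v) :=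
        mul_le_mul h2 h2 hp0 (le_trans hp0 h2)
      have h5 : (μmin ^ 2 * a) * a ≤ b * a := by nlinarith [hsq, h3]
      exact le_of_mul_le_mul_right h5 h
  have h1 : w ⬝ᵥ H.mulVec w ≤ μmax * a := hHup w
  have hmain : w ⬝ᵥ H.mulVec w ≤ μmax / μmin ^ 2 * b := by
    have : μmax * a ≤ μmax / μmin ^ 2 * b := by
      rw [div_mul_eq_mul_div, le_div_iff₀ (by positivity)]
      nlinarith
    linarith
  calc Real.sqrt (w ⬝ᵥ H.mulVec w)
      ≤ Real.sqrt (μmax / μmin ^ 2 * b) := Real.sqrt_le_sqrt hmain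
    _ = (Real.sqrt μmax / μmin) * Real.sqrt b := by
        rw [Real.sqrt_mul (by positivity), Real.sqrt_div hμmax.le,
          Real.sqrt_sq hμmin.le]
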